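/- Let ψ̂(x) = p + q x agree with μ̂ on [u,v], and let (â, b̂) be the ordinary least squares intercept and slope over the data points x_i ∈ [u,v] (indices k_1 ≤ i ≤ k_2). Then for all x ∈ [u, v]: |â + b̂x - μ̂(x)| ≤ |v - u| · |(x̄ T¹ - T²)/Σ_{u ≤ x_i ≤ v}(x_i - x̄)²| + |T¹|/(k_2 - k_1 + 1), where T¹ = Σ_{u ≤ x_i ≤ v}(Y_i - μ̂(x_i)), T² = Σ_{u ≤ x_i ≤ v} x_i (Y_i - μ̂(x_i)), and x̄ is the mean of the x_i in [u,v]. -/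

import Mathlib

theorem stmt_7 (n : ℕ) (x Y : Fin n → ℝ) (μhat : ℝ → ℝ)
    (u v p q : ℝ) (huv : u < v)
    (S : Finset (Fin n)) (hS : S = Finset.univ.filter (fun i => u ≤ x i ∧ x i ≤ v))
    (k1 k2 : ℕ) (hk : k1 ≤ k2) (hcard : S.card = k2 - k1 + 1)
    (haff : ∀ t ∈ Set.Icc u v, μhat t = p + q * t)
    (xbar Ybar : ℝ)
    (hxbar : xbar = (∑ i ∈ S, x i) / S.card)
    (hYbar : Ybar = (∑ i ∈ S, Y i) / S.card)
    (hpos : 0 < ∑ i ∈ S, (x i - xbar) ^ 2)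
    (bhat ahat : ℝ)
    (hb : bhat = (∑ i ∈ S, (x i - xbar) * (Y i - Ybar)) / ∑ i ∈ S, (x i - xbar) ^ 2)
    (ha : ahat = Ybar - bhat * xbar)
    (T1 T2 : ℝ)
    (hT1 : T1 = ∑ i ∈ S, (Y i - μhat (x i)))
    (hT2 : T2 = ∑ i ∈ S, x i * (Y i - μhat (x i))) :
    ∀ t ∈ Set.Icc u v,
      |ahat + bhat * t - μhat t| ≤
        |v - u| * |(xbar * T1 - T2) / ∑ i ∈ S, (x i - xbar) ^ 2| +
          |T1| / ((k2 : ℝ) - (k1 : ℝ) + 1) := by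
  intro t ht
  obtain ⟨htu, htv⟩ := ht
  have hN0 : 0 < S.card := by omega
  have hNpos : (0 : ℝ) < (S.card : ℝ) := by exact_mod_cast hN0
  have hNne : (S.card : ℝ) ≠ 0 := ne_of_gt hNpos
  set c := ∑ i ∈ S, (x i - xbar) ^ 2 with hcdef
  have hcne : c ≠ 0 := ne_of_gt hpos
  have hmem : ∀ i ∈ S, u ≤ x i ∧ x i ≤ v := by
    intro i hi; rw [hS] at hi; simpa using hi
  have hmu : ∀ i ∈ S, μhat (x i) = p + q * x i := fun i hi =>
    haff _ ⟨(hmem i hi).1, (hmem i hi).2⟩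
  have hsumx : ∑ i ∈ S, x i = (S.card : ℝ) * xbar := by
    rw [hxbar]; field_simp
  have hsumY : ∑ i ∈ S, Y i = (S.card : ℝ) * Ybar := by
    rw [hYbar]; field_simp
  -- T1 identity
  have hT1' : T1 = (S.card : ℝ) * Ybar - (S.card : ℝ) * p - q * ((S.card : ℝ) * xbar) := by
    rw [hT1, Finset.sum_congr rfl (fun i hi => by rw [hmu i hi])]
    rw [Finset.sum_sub_distrib, Finset.sum_add_distrib, Finset.sum_const, ← Finset.mul_sum,
      hsumx, hsumY, nsmul_eq_mul]
    ring
  have hkey1 : Ybar - p - q * xbar = T1 / (S.card : ℝ) := by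
    rw [hT1']; field_simp
  -- T2 identity
  have hT2' : T2 = (∑ i ∈ S, x i * Y i) - p * ((S.card : ℝ) * xbar) - q * ∑ i ∈ S, (x i) ^ 2 := by
    rw [hT2, Finset.sum_congr rfl (fun i hi => by rw [hmu i hi])]
    have : ∀ i ∈ S, x i * (Y i - (p + q * x i)) = x i * Y i - p * x i - q * (x i) ^ 2 := by
      intro i _; ring
    rw [Finset.sum_congr rfl this]
    rw [Finset.sum_sub_distrib, Finset.sum_sub_distrib, ← Finset.mul_sum, ← Finset.mul_sum, hsumx]
  have hcval : c = (∑ i ∈ S, (x i) ^ 2) - (S.card : ℝ) * xbar ^ 2 := by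
    rw [hcdef]
    have : ∀ i ∈ S, (x i - xbar) ^ 2 = (x i) ^ 2 - 2 * xbar * x i + xbar ^ 2 := by
      intro i _; ring
    rw [Finset.sum_congr rfl this, Finset.sum_add_distrib, Finset.sum_sub_distrib,
      Finset.sum_const, ← Finset.mul_sum, hsumx, nsmul_eq_mul]
    ring
  have hbnum : ∑ i ∈ S, (x i - xbar) * (Y i - Ybar)
      = (∑ i ∈ S, x i * Y i) - (S.card : ℝ) * xbar * Ybar := by
    have : ∀ i ∈ S, (x i - xbar) * (Y i - Ybar)
        = x i * Y i - xbar * Y i - Ybar * x i + xbar * Ybar := by intro i _; ring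
    rw [Finset.sum_congr rfl this, Finset.sum_add_distrib, Finset.sum_sub_distrib,
      Finset.sum_sub_distrib, Finset.sum_const, ← Finset.mul_sum, ← Finset.mul_sum,
      hsumx, hsumY, nsmul_eq_mul]
    ring
  have hbc : bhat * c = (∑ i ∈ S, (x i - xbar) * (Y i - Ybar)) := by
    rw [hb]; field_simp
  have hkey2 : bhat - q = (T2 - xbar * T1) / c := by
    have hnum : T2 - xbar * T1 = bhat * c - q * c := by
      rw [hbc, hbnum, hT1', hT2', hcval]; ring
    rw [hnum]; field_simp
  -- the main decomposition
  have hform : ahat + bhat * t - μhat t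
      = (t - xbar) * ((T2 - xbar * T1) / c) + T1 / (S.card : ℝ) := by
    rw [haff t ⟨htu, htv⟩, ha, ← hkey1, ← hkey2]; ring
  -- xbar bounds
  have hxbar_le : xbar ≤ v := by
    rw [hxbar]
    rw [div_le_iff₀ hNpos]
    calc ∑ i ∈ S, x i ≤ ∑ i ∈ S, v := Finset.sum_le_sum (fun i hi => (hmem i hi).2)
    _ = v * (S.card : ℝ) := by rw [Finset.sum_const, nsmul_eq_mul]; ring
  have hxbar_ge : u ≤ xbar := by
    rw [hxbar, le_div_iff₀ hNpos]
    calc u * (S.card : ℝ) = ∑ i ∈ S, u := by rw [Finset.sum_const, nsmul_eq_mul]; ring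
    _ ≤ ∑ i ∈ S, x i := Finset.sum_le_sum (fun i hi => (hmem i hi).1)
  have htx : |t - xbar| ≤ |v - u| := by
    rw [abs_of_pos (by linarith : (0:ℝ) < v - u), abs_sub_le_iff]
    constructor <;> linarith
  have hNeq : ((k2 : ℝ) - (k1 : ℝ) + 1) = (S.card : ℝ) := by
    rw [hcard]; push_cast [Nat.cast_sub hk]; ring
  have habs : |(T2 - xbar * T1) / c| = |(xbar * T1 - T2) / c| := by
    rw [← abs_neg]; congr 1; ring
  calc |ahat + bhat * t - μhat t|
      = |(t - xbar) * ((T2 - xbar * T1) / c) + T1 / (S.card : ℝ)| := by rw [hform]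
    _ ≤ |(t - xbar) * ((T2 - xbar * T1) / c)| + |T1 / (S.card : ℝ)| := abs_add_le _ _
    _ = |t - xbar| * |(xbar * T1 - T2) / c| + |T1| / (S.card : ℝ) := by
        rw [abs_mul, habs, abs_div T1, abs_of_pos hNpos]
    _ ≤ |v - u| * |(xbar * T1 - T2) / c| + |T1| / ((k2 : ℝ) - (k1 : ℝ) + 1) := by
        rw [hNeq]
        gcongr
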